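/- For x > 0, the standard normal CDF Φ satisfies φ(x)/(1+x) < 1 − Φ(x) < 2φ(x)/(1+x), where φ is the standard normal density. -/

import Mathlib

open ProbabilityTheory MeasureTheory Set Filter Real
open scoped Topology

noncomputable def phi (t : ℝ) : ℝ := gaussianPDFReal 0 1 t

lemma phi_eq : phi = fun t : ℝ => (Real.sqrt (2 * π))⁻¹ * Real.exp (-t ^ 2 / 2) := by
  ext t
  simp [phi, gaussianPDFReal]

lemma phi_pos (t : ℝ) : 0 < phi t := gaussianPDFReal_pos 0 1 t one_ne_zero

lemma hasDerivAt_phi (t : ℝ) : HasDerivAt phi (-t * phi t) t := by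
  have h1 : HasDerivAt (fun t : ℝ => -t ^ 2 / 2) (-t) t := by
    have := ((hasDerivAt_pow 2 t).neg).div_const 2
    simpa using this.congr_deriv (by push_cast; ring)
  have := (h1.exp).const_mul (Real.sqrt (2 * π))⁻¹
  rw [phi_eq]
  refine this.congr_deriv ?_
  beta_reduce
  ring

noncomputable def psi (t : ℝ) : ℝ := phi t * ((1 + t + t ^ 2) / (1 + t) ^ 2)

lemma hasDerivAt_negdiv (t : ℝ) (ht : (0:ℝ) < 1 + t) :
    HasDerivAt (fun t => -phi t / (1 + t)) (psi t) t := by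
  have hu : HasDerivAt (fun t => -phi t) (-(-t * phi t)) t := (hasDerivAt_phi t).neg
  have hv : HasDerivAt (fun t : ℝ => 1 + t) 1 t := by
    simpa using (hasDerivAt_id t).const_add 1
  have := hu.div hv ht.ne'
  refine this.congr_deriv ?_
  unfold psi
  field_simp
  ring

lemma tendsto_phi : Tendsto phi atTop (𝓝 0) := by
  rw [phi_eq]
  rw [show (0:ℝ) = (Real.sqrt (2 * π))⁻¹ * 0 by ring]
  refine Tendsto.const_mul _ ?_
  refine Real.tendsto_exp_atBot.comp ?_
  have : Tendsto (fun t : ℝ => t ^ 2 / 2) atTop atTop :=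
    (tendsto_pow_atTop two_ne_zero).atTop_div_const two_pos
  have := tendsto_neg_atBot_iff.mpr this
  refine this.congr (fun t => by ring)

lemma tendsto_negdiv : Tendsto (fun t => -phi t / (1 + t)) atTop (𝓝 0) := by
  refine squeeze_zero_norm' ?_ tendsto_phi
  filter_upwards [eventually_ge_atTop (0:ℝ)] with t ht
  rw [norm_div, norm_neg]
  rw [Real.norm_of_nonneg (phi_pos t).le, Real.norm_of_nonneg (by linarith)]
  calc phi t / (1 + t) ≤ phi t / 1 := by
        apply div_le_div_of_nonneg_left (phi_pos t).le one_pos (by linarith)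
    _ = phi t := div_one _

lemma psi_nonneg {t : ℝ} (ht : 0 < 1 + t) : 0 ≤ psi t := by
  have := phi_pos t
  have : (0:ℝ) ≤ (1 + t + t ^ 2) / (1 + t) ^ 2 := by positivity
  unfold psi; positivity

lemma psi_le_phi {t : ℝ} (ht : 0 ≤ t) : psi t ≤ phi t := by
  unfold psi
  nth_rewrite 2 [show phi t = phi t * 1 by ring]
  apply mul_le_mul_of_nonneg_left _ (phi_pos t).le
  rw [div_le_one (by positivity)]
  nlinarith

lemma psi_integrableOn (x : ℝ) (hx : 0 < x) : IntegrableOn psi (Ioi x) := by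
  apply Integrable.mono ((integrable_gaussianPDFReal 0 1).restrict (s := Ioi x))
  · apply Measurable.aestronglyMeasurable
    unfold psi
    rw [phi_eq]
    fun_prop
  · filter_upwards [ae_restrict_mem measurableSet_Ioi] with t (ht : x < t)
    have ht0 : (0:ℝ) ≤ t := le_of_lt (hx.trans ht)
    rw [Real.norm_of_nonneg (psi_nonneg (by linarith)), show gaussianPDFReal 0 1 t = phi t from rfl, Real.norm_of_nonneg (phi_pos t).le]
    exact psi_le_phi ht0

lemma key_identity (x : ℝ) (hx : 0 < x) :
    ∫ t in Ioi x, psi t = phi x / (1 + x) := by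
  have h := integral_Ioi_of_hasDerivAt_of_tendsto' (f := fun t => -phi t / (1 + t))
    (f' := psi) (a := x)
    (fun t ht => hasDerivAt_negdiv t (by simp only [mem_Ici] at ht; linarith))
    (psi_integrableOn x hx) tendsto_negdiv
  rw [h]
  ring

lemma tail_eq (x : ℝ) : 1 - cdf (gaussianReal 0 1) x = ∫ t in Ioi x, phi t := by
  set μ := gaussianReal 0 1 with hμ
  have h1 : μ (Ioi x) = 1 - μ (Iic x) := by
    rw [← compl_Iic]
    exact prob_compl_eq_one_sub measurableSet_Iic
  have h2 : μ (Ioi x) = ENNReal.ofReal (∫ t in Ioi x, phi t) :=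
    gaussianReal_apply_eq_integral 0 one_ne_zero (Ioi x)
  have hnn : 0 ≤ ∫ t in Ioi x, phi t :=
    setIntegral_nonneg measurableSet_Ioi (fun t _ => (phi_pos t).le)
  rw [cdf_eq_real, measureReal_def]
  have := congrArg ENNReal.toReal (h1.symm.trans h2)
  rw [ENNReal.toReal_sub_of_le prob_le_one ENNReal.one_ne_top, ENNReal.toReal_one,
    ENNReal.toReal_ofReal hnn] at this
  linarith

lemma psi_lt_phi {t : ℝ} (ht : 0 < t) : psi t < phi t := by
  unfold psi
  nth_rewrite 2 [show phi t = phi t * 1 by ring]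
  apply mul_lt_mul_of_pos_left _ (phi_pos t)
  rw [div_lt_one (by positivity)]
  nlinarith

lemma phi_lt_two_psi {t : ℝ} (ht : 0 < t) : phi t < 2 * psi t := by
  unfold psi
  nth_rewrite 1 [show phi t = phi t * 1 by ring]
  rw [← mul_assoc, mul_comm (2:ℝ) (phi t), mul_assoc]
  apply mul_lt_mul_of_pos_left _ (phi_pos t)
  rw [show (2:ℝ) * ((1 + t + t ^ 2) / (1 + t) ^ 2) = (2 * (1 + t + t ^ 2)) / (1 + t) ^ 2 by ring, lt_div_iff₀ (by positivity : (0:ℝ) < (1+t)^2)]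
  nlinarith

/-- For `x > 0`, the standard normal CDF `Φ` satisfies
`φ(x)/(1+x) < 1 - Φ(x) < 2 φ(x)/(1+x)`, where `φ` is the standard normal density. -/
theorem gaussian_cdf_tail_bounds (x : ℝ) (hx : 0 < x) :
    gaussianPDFReal 0 1 x / (1 + x) < 1 - cdf (gaussianReal 0 1) x ∧
    1 - cdf (gaussianReal 0 1) x < 2 * gaussianPDFReal 0 1 x / (1 + x) := by
  have hIphi : IntegrableOn phi (Ioi x) := (integrable_gaussianPDFReal 0 1).integrableOn
  have hIpsi := psi_integrableOn x hx
  have key := key_identity x hx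
  have tail := tail_eq x
  have hvol : (0:ENNReal) < volume (Ioi x) := by simp [Real.volume_Ioi]
  constructor
  · have hpos : 0 < ∫ t in Ioi x, (phi t - psi t) := by
      rw [setIntegral_pos_iff_support_of_nonneg_ae]
      · refine lt_of_lt_of_le hvol (measure_mono ?_)
        intro t ht
        exact ⟨ne_of_gt (sub_pos.mpr (psi_lt_phi (hx.trans ht))), ht⟩
      · filter_upwards [ae_restrict_mem measurableSet_Ioi] with t (ht : x < t)
        exact sub_nonneg.mpr (psi_lt_phi (hx.trans ht)).le
      · exact hIphi.sub hIpsi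
    rw [integral_sub hIphi hIpsi] at hpos
    show phi x / (1 + x) < 1 - cdf (gaussianReal 0 1) x
    rw [tail, ← key]
    linarith
  · have hpos : 0 < ∫ t in Ioi x, (2 * psi t - phi t) := by
      rw [setIntegral_pos_iff_support_of_nonneg_ae]
      · refine lt_of_lt_of_le hvol (measure_mono ?_)
        intro t ht
        exact ⟨ne_of_gt (sub_pos.mpr (phi_lt_two_psi (hx.trans ht))), ht⟩
      · filter_upwards [ae_restrict_mem measurableSet_Ioi] with t (ht : x < t)
        exact sub_nonneg.mpr (phi_lt_two_psi (hx.trans ht)).le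
      · exact (hIpsi.const_mul 2).sub hIphi
    rw [integral_sub (hIpsi.const_mul 2) hIphi, MeasureTheory.integral_const_mul] at hpos
    show 1 - cdf (gaussianReal 0 1) x < 2 * phi x / (1 + x)
    rw [tail, mul_div_assoc, ← key]
    linarith
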